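/- Let Ω ⊆ ℝ² be open, let f : Ω → ℝ³ be twice continuously differentiable, and let ε : Ω → ℝ³ be a twice continuously differentiable map satisfying ∂₁ε = 2ε × ∂₂f and ∂₂ε = −2ε × ∂₁f on Ω. Then at every point of Ω one has ε × (2·(∂₁f × ∂₂f) − (∂₁∂₁f + ∂₂∂₂f)) = 0. -/

import Mathlib

open scoped RealInnerProductSpace ContDiff

/-- First partial derivative (in the first coordinate direction of `ℝ × ℝ`). -/
noncomputable def pd1 {E : Type*} [NormedAddCommGroup E] [NormedSpace ℝ E]
    (f : ℝ × ℝ → E) : ℝ × ℝ → E := fun p => fderiv ℝ f p (1, 0)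

/-- Second partial derivative (in the second coordinate direction of `ℝ × ℝ`). -/
noncomputable def pd2 {E : Type*} [NormedAddCommGroup E] [NormedSpace ℝ E]
    (f : ℝ × ℝ → E) : ℝ × ℝ → E := fun p => fderiv ℝ f p (0, 1)

/-- The standard cross product on `ℝ³`. -/
def cross3 (a b : EuclideanSpace ℝ (Fin 3)) : EuclideanSpace ℝ (Fin 3) := WithLp.toLp 2 (crossProduct a b)

abbrev E3 := EuclideanSpace ℝ (Fin 3)

/-- The cross product as a continuous bilinear map. -/
noncomputable def crossL : E3 →L[ℝ] E3 →L[ℝ] E3 :=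
  LinearMap.toContinuousLinearMap
    (LinearMap.toContinuousLinearMap.toLinearMap ∘ₗ (((crossProduct : (Fin 3 → ℝ) →ₗ[ℝ] (Fin 3 → ℝ) →ₗ[ℝ] (Fin 3 → ℝ)).compl₁₂
      (WithLp.linearEquiv 2 ℝ (Fin 3 → ℝ)).toLinearMap
      (WithLp.linearEquiv 2 ℝ (Fin 3 → ℝ)).toLinearMap).compr₂
      (WithLp.linearEquiv 2 ℝ (Fin 3 → ℝ)).symm.toLinearMap : E3 →ₗ[ℝ] E3 →ₗ[ℝ] E3))

lemma crossL_eq (a b : E3) : crossL a b = cross3 a b := rfl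

/-- Leibniz rule for cross products of functions, in a fixed direction. -/
lemma fderiv_cross (u w : ℝ × ℝ → E3) (p v : ℝ × ℝ)
    (hu : DifferentiableAt ℝ u p) (hw : DifferentiableAt ℝ w p) :
    fderiv ℝ (fun q => cross3 (u q) (w q)) p v =
      cross3 (fderiv ℝ u p v) (w p) + cross3 (u p) (fderiv ℝ w p v) := by
  have hc : DifferentiableAt ℝ (fun q => crossL (u q)) p :=
    (crossL.differentiable.differentiableAt).comp p hu
  have h1 : fderiv ℝ (fun q => crossL (u q)) p = crossL.comp (fderiv ℝ u p) := by
    rw [show (fun q => crossL (u q)) = crossL ∘ u from rfl,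
      fderiv_comp p crossL.differentiableAt hu, crossL.fderiv]
  have := fderiv_clm_apply (c := fun q => crossL (u q)) (u := w) hc hw
  have h2 : fderiv ℝ (fun q => crossL (u q) (w q)) p =
      (crossL (u p)).comp (fderiv ℝ w p) + (crossL.comp (fderiv ℝ u p)).flip (w p) := by
    rw [← h1]; exact this
  have h3 := congrArg (fun (L : ℝ × ℝ →L[ℝ] E3) => L v) h2
  simp only [ContinuousLinearMap.add_apply, ContinuousLinearMap.comp_apply,
    ContinuousLinearMap.flip_apply] at h3
  rw [show (fun q => cross3 (u q) (w q)) = fun q => crossL (u q) (w q) from rfl]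
  rw [h3, crossL_eq, crossL_eq]
  abel

/-- Derivative in a fixed direction of a clm-valued map applied to a constant vector. -/
lemma fderiv_apply_const {F : Type*} [NormedAddCommGroup F] [NormedSpace ℝ F]
    (c : ℝ × ℝ → (ℝ × ℝ) →L[ℝ] F) (p v w : ℝ × ℝ) (hc : DifferentiableAt ℝ c p) :
    fderiv ℝ (fun q => c q v) p w = fderiv ℝ c p w v := by
  have := fderiv_clm_apply (c := c) (u := fun _ => v) hc (differentiableAt_const v)
  have h := congrArg (fun (L : ℝ × ℝ →L[ℝ] F) => L w) this
  simp [fderiv_const] at h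
  exact h

/-- The pointwise vector algebra. -/
lemma cross_alg (a F1 F2 F11 F22 : E3)
    (h : (2:ℝ) • (cross3 (-((2:ℝ) • cross3 a F1)) F2 + cross3 a F22) =
      -((2:ℝ) • (cross3 ((2:ℝ) • cross3 a F2) F1 + cross3 a F11))) :
    cross3 a ((2:ℝ) • cross3 F1 F2 - (F11 + F22)) = 0 := by
  ext i
  have hi := congrArg (fun x : E3 => x i) h
  fin_cases i <;>
  · simp only [cross3, crossProduct, LinearMap.mk₂_apply, PiLp.smul_apply, PiLp.add_apply,
      PiLp.neg_apply, PiLp.sub_apply, smul_eq_mul, PiLp.zero_apply, PiLp.toLp_apply,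
      WithLp.ofLp_toLp, WithLp.ofLp_smul, WithLp.ofLp_add, WithLp.ofLp_neg, WithLp.ofLp_sub,
      Pi.smul_apply, Pi.add_apply, Pi.neg_apply, Pi.sub_apply,
      show ((⟨0, by norm_num⟩ : Fin 3)) = 0 from rfl,
      show ((⟨1, by norm_num⟩ : Fin 3)) = 1 from rfl,
      show ((⟨2, by norm_num⟩ : Fin 3)) = 2 from rfl,
      Matrix.cons_val_zero, Matrix.cons_val_one, Matrix.head_cons,
      Matrix.cons_val_two, Matrix.tail_cons] at hi ⊢
    linarith [hi]

/-- A (nonzero-able) solution of the homogeneous spinning sphere system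
forces `ε × (2·∂₁f × ∂₂f − Δ₀f) = 0` pointwise. -/
theorem integrability_necessary_condition (Ω : Set (ℝ × ℝ)) (hΩ : IsOpen Ω)
    (f : ℝ × ℝ → EuclideanSpace ℝ (Fin 3)) (hf : ContDiffOn ℝ 2 f Ω)
    (ε : ℝ × ℝ → EuclideanSpace ℝ (Fin 3)) (hε : ContDiffOn ℝ 2 ε Ω)
    (hε1 : ∀ p ∈ Ω, pd1 ε p = (2 : ℝ) • cross3 (ε p) (pd2 f p))
    (hε2 : ∀ p ∈ Ω, pd2 ε p = -((2 : ℝ) • cross3 (ε p) (pd1 f p))) :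
    ∀ p ∈ Ω,
      cross3 (ε p)
        ((2 : ℝ) • cross3 (pd1 f p) (pd2 f p) - (pd1 (pd1 f) p + pd2 (pd2 f) p)) = 0 := by
  intro p hp
  have hmem : Ω ∈ nhds p := hΩ.mem_nhds hp
  -- differentiability of ε and of the first partials of f, at every point of Ω
  have hεd : ∀ q ∈ Ω, DifferentiableAt ℝ ε q := fun q hq =>
    (hε.contDiffAt (hΩ.mem_nhds hq)).differentiableAt (by norm_num)
  have hf' : ContDiffOn ℝ 1 (fderiv ℝ f) Ω := hf.fderiv_of_isOpen hΩ le_rfl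
  have hfd' : ∀ q ∈ Ω, DifferentiableAt ℝ (fderiv ℝ f) q := fun q hq =>
    (hf'.contDiffAt (hΩ.mem_nhds hq)).differentiableAt one_ne_zero
  have hpd1f : ∀ q ∈ Ω, DifferentiableAt ℝ (pd1 f) q := fun q hq =>
    (hfd' q hq).clm_apply (differentiableAt_const _)
  have hpd2f : ∀ q ∈ Ω, DifferentiableAt ℝ (pd2 f) q := fun q hq =>
    (hfd' q hq).clm_apply (differentiableAt_const _)
  have hε' : DifferentiableAt ℝ (fderiv ℝ ε) p :=
    ((hε.contDiffAt hmem).fderiv_right (m := 1) le_rfl).differentiableAt one_ne_zero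
  -- symmetry of second derivative of ε
  have hsymm : IsSymmSndFDerivAt ℝ ε p :=
    (hε.contDiffAt hmem).isSymmSndFDerivAt (by simp)
  have hmix : pd2 (pd1 ε) p = pd1 (pd2 ε) p := by
    show fderiv ℝ (fun q => fderiv ℝ ε q (1, 0)) p (0, 1)
      = fderiv ℝ (fun q => fderiv ℝ ε q (0, 1)) p (1, 0)
    rw [fderiv_apply_const _ _ _ _ hε', fderiv_apply_const _ _ _ _ hε']
    exact hsymm (0, 1) (1, 0)
  -- compute pd2 (pd1 ε) p
  have e1 : pd1 ε =ᶠ[nhds p] fun q => (2 : ℝ) • cross3 (ε q) (pd2 f q) := by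
    filter_upwards [hmem] with q hq using hε1 q hq
  have e2 : pd2 ε =ᶠ[nhds p] fun q => -((2 : ℝ) • cross3 (ε q) (pd1 f q)) := by
    filter_upwards [hmem] with q hq using hε2 q hq
  have hcross2 : DifferentiableAt ℝ (fun q => cross3 (ε q) (pd2 f q)) p := by
    exact ((crossL.differentiable.differentiableAt).comp p (hεd p hp)).clm_apply (hpd2f p hp)
  have hcross1 : DifferentiableAt ℝ (fun q => cross3 (ε q) (pd1 f q)) p := by
    exact ((crossL.differentiable.differentiableAt).comp p (hεd p hp)).clm_apply (hpd1f p hp)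
  have key1 : pd2 (pd1 ε) p =
      (2 : ℝ) • (cross3 (pd2 ε p) (pd2 f p) + cross3 (ε p) (pd2 (pd2 f) p)) := by
    show fderiv ℝ (pd1 ε) p (0, 1) = _
    rw [e1.fderiv_eq, fderiv_fun_const_smul hcross2,
      show ∀ L : (ℝ × ℝ) →L[ℝ] E3, ((2:ℝ) • L) (0,1) = (2:ℝ) • L (0,1) from fun _ => rfl,
      fderiv_cross _ _ _ _ (hεd p hp) (hpd2f p hp)]
    rfl
  have key2 : pd1 (pd2 ε) p =
      -((2 : ℝ) • (cross3 (pd1 ε p) (pd1 f p) + cross3 (ε p) (pd1 (pd1 f) p))) := by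
    show fderiv ℝ (pd2 ε) p (1, 0) = _
    rw [e2.fderiv_eq, fderiv_fun_neg, ContinuousLinearMap.neg_apply, fderiv_fun_const_smul hcross1,
      show ∀ L : (ℝ × ℝ) →L[ℝ] E3, ((2:ℝ) • L) (1,0) = (2:ℝ) • L (1,0) from fun _ => rfl,
      fderiv_cross _ _ _ _ (hεd p hp) (hpd1f p hp)]
    rfl
  have h := hmix
  rw [key1, key2, hε1 p hp, hε2 p hp] at h
  exact cross_alg _ _ _ _ _ h
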